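/- arXiv:math-ph/0604039 — 2 statements merged into one kernel-verified Lean document; each statement's English description precedes it below -/
import Mathlib

section
/- Let Λ ∈ (0, 1/2]. There exists a positive constant c*_Λ ≪ 1 such that for every a ∈ [2+Λ, 4−Λ] with |a − 3| ≥ Λ and every p ∈ [−π,π]³ with e(p) = a and K(p) = 0 (note that s₁²+s₂²+s₃² > 0 at such p, so K is defined and smooth near p), one has |∇e(p) × ∇K(p)| ≥ c*_Λ, where × is the cross product in ℝ³ and ∇K is the gradient of the function K. -/
open Real

noncomputable section

abbrev E3 := EuclideanSpace ℝ (Fin 3)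

def toE3 (v : Fin 3 → ℝ) : E3 := (EuclideanSpace.equiv (Fin 3) ℝ).symm v

/-- Cross product of two vectors in `ℝ³`. -/
def cross3 (a b : E3) : E3 :=
  toE3 ![a 1 * b 2 - a 2 * b 1, a 2 * b 0 - a 0 * b 2, a 0 * b 1 - a 1 * b 0]

/-- The dispersion relation `e(p) = ∑ (1 - cos pⱼ)`. -/
def e3 (p : E3) : ℝ := ∑ i, (1 - Real.cos (p i))

/-- `∇e(p) = (s₁, s₂, s₃)`. -/
def gradE (p : E3) : E3 := toE3 fun i => Real.sin (p i)

/-- `ssum p = s₁² + s₂² + s₃²`. -/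
def ssum (p : E3) : ℝ := ∑ i, Real.sin (p i) ^ 2

/-- `M(p) = s₁²c₂c₃ + s₂²c₁c₃ + s₃²c₁c₂`. -/
def Mf (p : E3) : ℝ :=
  Real.sin (p 0) ^ 2 * Real.cos (p 1) * Real.cos (p 2) +
  Real.sin (p 1) ^ 2 * Real.cos (p 0) * Real.cos (p 2) +
  Real.sin (p 2) ^ 2 * Real.cos (p 0) * Real.cos (p 1)

/-- Gauss curvature function `K(p) = M(p)/(s₁²+s₂²+s₃²)²`. -/
def Kf (p : E3) : ℝ := Mf p / (ssum p) ^ 2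

/-! ### Auxiliary machinery: gradients -/

lemma toE3_apply (v : Fin 3 → ℝ) (i : Fin 3) : toE3 v i = v i := rfl

lemma hasGradientAt_of_hasFDerivAt {f : E3 → ℝ} {L : E3 →L[ℝ] ℝ} {p : E3}
    (h : HasFDerivAt f L p) (g : Fin 3 → ℝ)
    (hg : ∀ i, L (EuclideanSpace.single i (1:ℝ)) = g i) :
    HasGradientAt f (toE3 g) p := by
  rw [hasGradientAt_iff_hasFDerivAt]
  convert h using 1
  pick_goal 5
  apply ContinuousLinearMap.coe_injective
  apply Module.Basis.ext (EuclideanSpace.basisFun (Fin 3) ℝ).toBasis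
  intro i
  simp only [OrthonormalBasis.coe_toBasis, EuclideanSpace.basisFun_apply,
    ContinuousLinearMap.coe_coe, hg i]
  rw [InnerProductSpace.toDual_apply_apply, EuclideanSpace.inner_single_right]
  simp [toE3_apply]
  all_goals rfl

lemma hasFDerivAt_coord (i : Fin 3) (p : E3) :
    HasFDerivAt (fun q : E3 => q i) (EuclideanSpace.proj i : E3 →L[ℝ] ℝ) p :=
  (EuclideanSpace.proj i : E3 →L[ℝ] ℝ).hasFDerivAt

lemma hasFDerivAt_coord_cos (i : Fin 3) (p : E3) :
    HasFDerivAt (fun q : E3 => Real.cos (q i))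
      ((-Real.sin (p i)) • (EuclideanSpace.proj i : E3 →L[ℝ] ℝ)) p :=
  (Real.hasDerivAt_cos (p i)).comp_hasFDerivAt (f := fun q : E3 => q i) p (hasFDerivAt_coord i p)

lemma hasFDerivAt_coord_sin (i : Fin 3) (p : E3) :
    HasFDerivAt (fun q : E3 => Real.sin (q i))
      ((Real.cos (p i)) • (EuclideanSpace.proj i : E3 →L[ℝ] ℝ)) p :=
  (Real.hasDerivAt_sin (p i)).comp_hasFDerivAt (f := fun q : E3 => q i) p (hasFDerivAt_coord i p)

/-- Components of the gradient of `Mf`. -/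
def gM (p : E3) : Fin 3 → ℝ :=
  ![Real.sin (p 0) * (2 * Real.cos (p 0) * Real.cos (p 1) * Real.cos (p 2)
      - Real.sin (p 1) ^ 2 * Real.cos (p 2) - Real.sin (p 2) ^ 2 * Real.cos (p 1)),
    Real.sin (p 1) * (2 * Real.cos (p 0) * Real.cos (p 1) * Real.cos (p 2)
      - Real.sin (p 0) ^ 2 * Real.cos (p 2) - Real.sin (p 2) ^ 2 * Real.cos (p 0)),
    Real.sin (p 2) * (2 * Real.cos (p 0) * Real.cos (p 1) * Real.cos (p 2)
      - Real.sin (p 0) ^ 2 * Real.cos (p 1) - Real.sin (p 1) ^ 2 * Real.cos (p 0))]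

lemma Mf_eq : Mf = fun p : E3 =>
    Real.sin (p 0) * Real.sin (p 0) * Real.cos (p 1) * Real.cos (p 2) +
    (Real.sin (p 1) * Real.sin (p 1) * Real.cos (p 0) * Real.cos (p 2) +
    Real.sin (p 2) * Real.sin (p 2) * Real.cos (p 0) * Real.cos (p 1)) := by
  funext p; simp [Mf]; ring

set_option maxHeartbeats 1000000 in
lemma hasGradientAt_Mf (p : E3) : HasGradientAt Mf (toE3 (gM p)) p := by
  have h := ((((hasFDerivAt_coord_sin 0 p).mul (hasFDerivAt_coord_sin 0 p)).mul
      (hasFDerivAt_coord_cos 1 p)).mul (hasFDerivAt_coord_cos 2 p)).add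
    (((((hasFDerivAt_coord_sin 1 p).mul (hasFDerivAt_coord_sin 1 p)).mul
      (hasFDerivAt_coord_cos 0 p)).mul (hasFDerivAt_coord_cos 2 p)).add
    ((((hasFDerivAt_coord_sin 2 p).mul (hasFDerivAt_coord_sin 2 p)).mul
      (hasFDerivAt_coord_cos 0 p)).mul (hasFDerivAt_coord_cos 1 p)))
  rw [Mf_eq]
  refine hasGradientAt_of_hasFDerivAt h _ fun i => ?_
  fin_cases i <;>
    simp only [ContinuousLinearMap.add_apply, ContinuousLinearMap.smul_apply,
      PiLp.proj_apply, EuclideanSpace.single_apply, gM, smul_eq_mul] <;>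
    norm_num [Fin.ext_iff] <;> ring

def csum (p : E3) : ℝ := Real.cos (p 0) + Real.cos (p 1) + Real.cos (p 2)

/-- Explicit formula for the cross product of `∇e` and `∇M`. -/
def cvec (p : E3) : Fin 3 → ℝ :=
  ![Real.sin (p 1) * Real.sin (p 2) * (Real.cos (p 2) - Real.cos (p 1)) * (1 - Real.cos (p 0) * csum p),
    Real.sin (p 0) * Real.sin (p 2) * (Real.cos (p 0) - Real.cos (p 2)) * (1 - Real.cos (p 1) * csum p),
    Real.sin (p 0) * Real.sin (p 1) * (Real.cos (p 1) - Real.cos (p 0)) * (1 - Real.cos (p 2) * csum p)]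

lemma cross_formula (p : E3) : cross3 (gradE p) (toE3 (gM p)) = toE3 (cvec p) := by
  ext i
  fin_cases i <;>
    simp [cross3, gradE, gM, cvec, csum, toE3_apply] <;>
    simp only [Real.sin_sq] <;> ring

lemma cross3_smul (a b : E3) (r : ℝ) : cross3 a (r • b) = r • cross3 a b := by
  ext i
  fin_cases i <;>
    simp [cross3, toE3_apply, PiLp.smul_apply, smul_eq_mul] <;> ring

lemma ssum_eq (p : E3) : ssum p =
    Real.sin (p 0) ^ 2 + Real.sin (p 1) ^ 2 + Real.sin (p 2) ^ 2 := by
  simp [ssum, Fin.sum_univ_three]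

lemma ssum_fun_eq : ssum = fun q : E3 =>
    Real.sin (q 0) * Real.sin (q 0) + (Real.sin (q 1) * Real.sin (q 1) +
      Real.sin (q 2) * Real.sin (q 2)) := by
  funext q; rw [ssum_eq]; ring

set_option maxHeartbeats 1000000 in
lemma hasGradientAt_Kf (p : E3) (h0 : ssum p ≠ 0) (hM : Mf p = 0) :
    HasGradientAt Kf ((ssum p ^ 2)⁻¹ • toE3 (gM p)) p := by
  have hgM := hasGradientAt_iff_hasFDerivAt.mp (hasGradientAt_Mf p)
  have hS := ((hasFDerivAt_coord_sin 0 p).mul (hasFDerivAt_coord_sin 0 p)).add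
    (((hasFDerivAt_coord_sin 1 p).mul (hasFDerivAt_coord_sin 1 p)).add
     ((hasFDerivAt_coord_sin 2 p).mul (hasFDerivAt_coord_sin 2 p)))
  replace hS := hS.congr_of_eventuallyEq (f₁ := ssum) (Filter.Eventually.of_forall fun q => by
    rw [ssum_eq]; simp only [Pi.mul_apply, Pi.add_apply]; ring)
  have hden := hS.mul hS
  have hfun : (fun q : E3 => ssum q ^ 2) = fun q : E3 => ssum q * ssum q := by
    funext q; ring
  replace hden := hden.congr_of_eventuallyEq (f₁ := fun q : E3 => ssum q ^ 2)
    (Filter.Eventually.of_forall fun q => by simp only [Pi.mul_apply]; ring)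
  have hne : ssum p ^ 2 ≠ 0 := pow_ne_zero _ h0
  have hinv := (hasDerivAt_inv hne).comp_hasFDerivAt p hden
  have hmul := hgM.mul hinv
  rw [hasGradientAt_iff_hasFDerivAt, map_smul]
  have hKf : Kf = fun q : E3 => Mf q * ((Inv.inv ∘ fun q : E3 => ssum q ^ 2) q) := by
    funext q; exact div_eq_mul_inv _ _
  rw [hKf]
  refine hmul.congr_fderiv ?_
  rw [hM, zero_smul, zero_add]
  rfl

/-! ### Algebraic core -/

lemma leaf2 (x y z : ℝ) (hx1 : x^2 = 1) (hy1 : y^2 = 1) (hz : z^2 < 1)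
    (hM : (1-x^2)*y*z + (1-y^2)*x*z + (1-z^2)*x*y = 0) : False := by
  have h : (1-z^2)*(x*y) = 0 := by linear_combination hM + (y*z)*hx1 + (x*z)*hy1
  rcases mul_eq_zero.mp h with h | h
  · nlinarith
  · have h2 : (x*y)^2 = 0 := by rw [h]; ring
    nlinarith [h2, hx1, hy1]

lemma leaf1 (Λ x y : ℝ) (hΛ0 : 0 < Λ) (hx1 : x^2 = 1) (hy : y^2 < 1)
    (h2 : |x + y + y| ≤ 1 - Λ)
    (hM : (1-x^2)*y*y + (1-y^2)*x*y + (1-y^2)*x*y = 0) : False := by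
  have h : (1-y^2)*(x*y) = 0 := by linear_combination hM/2 + (y*y/2)*hx1
  have hxy : x*y = 0 := by
    rcases mul_eq_zero.mp h with h | h
    · nlinarith
    · exact h
  have hy0 : y = 0 := by
    rcases mul_eq_zero.mp hxy with h | h
    · nlinarith
    · exact h
  subst hy0
  rw [add_zero, add_zero] at h2
  obtain ⟨hl, hr⟩ := abs_le.mp h2
  have hx : (x-1)*(x+1) = 0 := by linear_combination hx1
  rcases mul_eq_zero.mp hx with h | h <;> nlinarith

lemma leaf0 (Λ x : ℝ) (hΛ0 : 0 < Λ) (h1 : Λ ≤ |x+x+x|) (hxlt : x^2 < 1)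
    (hM : (1-x^2)*x*x + (1-x^2)*x*x + (1-x^2)*x*x = 0) : False := by
  have h : (1-x^2)*(x*x) = 0 := by linear_combination hM/3
  have hx0 : x = 0 := by
    rcases mul_eq_zero.mp h with h | h
    · nlinarith
    · rcases mul_eq_zero.mp h with h | h <;> exact h
  rw [hx0] at h1
  norm_num at h1
  linarith

lemma algKey (Λ x y z : ℝ) (hΛ0 : 0 < Λ)
    (hx : x^2 ≤ 1) (hy : y^2 ≤ 1) (hz : z^2 ≤ 1)
    (h1 : Λ ≤ |x+y+z|) (h2 : |x+y+z| ≤ 1-Λ)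
    (hM : (1-x^2)*y*z + (1-y^2)*x*z + (1-z^2)*x*y = 0)
    (hA : y^2 = 1 ∨ z^2 = 1 ∨ y = z)
    (hB : x^2 = 1 ∨ z^2 = 1 ∨ x = z)
    (hC : x^2 = 1 ∨ y^2 = 1 ∨ x = y)
    (hs : x^2 + y^2 + z^2 < 3) : False := by
  by_cases hx1 : x^2 = 1
  · by_cases hy1 : y^2 = 1
    · exact leaf2 x y z hx1 hy1 (by nlinarith) hM
    · by_cases hz1 : z^2 = 1
      · exact leaf2 x z y hx1 hz1 (by nlinarith) (by linear_combination hM)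
      · have hyz : y = z := by
          rcases hA with h | h | h
          exacts [absurd h hy1, absurd h hz1, h]
        subst hyz
        exact leaf1 Λ x y hΛ0 hx1 (lt_of_le_of_ne hy hy1) h2 (by linear_combination hM)
  · by_cases hy1 : y^2 = 1
    · by_cases hz1 : z^2 = 1
      · exact leaf2 y z x hy1 hz1 (by nlinarith) (by linear_combination hM)
      · have hxz : x = z := by
          rcases hB with h | h | h
          exacts [absurd h hx1, absurd h hz1, h]
        subst hxz
        exact leaf1 Λ y x hΛ0 hy1 (lt_of_le_of_ne hx hx1)
          (by rwa [show x + y + x = y + x + x from by ring] at h2) (by linear_combination hM)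
    · by_cases hz1 : z^2 = 1
      · have hxy : x = y := by
          rcases hC with h | h | h
          exacts [absurd h hx1, absurd h hy1, h]
        subst hxy
        exact leaf1 Λ z x hΛ0 hz1 (lt_of_le_of_ne hx hx1)
          (by rwa [show x + x + z = z + x + x from by ring] at h2) (by linear_combination hM)
      · have hyz : y = z := by
          rcases hA with h | h | h
          exacts [absurd h hy1, absurd h hz1, h]
        have hxz : x = z := by
          rcases hB with h | h | h
          exacts [absurd h hx1, absurd h hz1, h]
        subst hyz; subst hxz
        exact leaf0 Λ x hΛ0 h1 (lt_of_le_of_ne hx hx1) (by linear_combination hM)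

/-! ### Basic facts about `e3` and `ssum` -/

lemma e3_eq (p : E3) : e3 p = 3 - csum p := by
  simp only [e3, csum, Fin.sum_univ_three]; ring

lemma cos_sq_le_one' (t : ℝ) : Real.cos t ^ 2 ≤ 1 := by
  nlinarith [Real.neg_one_le_cos t, Real.cos_le_one t]

lemma ssum_le_three (p : E3) : ssum p ≤ 3 := by
  rw [ssum_eq]
  nlinarith [Real.sin_sq_le_one (p 0), Real.sin_sq_le_one (p 1), Real.sin_sq_le_one (p 2)]

lemma sin_zero_cos_sq {t : ℝ} (h : Real.sin t = 0) : Real.cos t = 1 ∨ Real.cos t = -1 := by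
  have h1 := Real.sin_sq_add_cos_sq t
  have h2 : (Real.cos t - 1) * (Real.cos t + 1) = 0 := by
    rw [h] at h1; linear_combination h1
  rcases mul_eq_zero.mp h2 with h' | h'
  · left; linarith
  · right; linarith

lemma ssum_pos_of {Λ : ℝ} (hΛ0 : 0 < Λ) (p : E3) (hb : |e3 p - 3| ≤ 1 - Λ) :
    0 < ssum p := by
  rcases lt_or_ge 0 (ssum p) with h | h
  · exact h
  exfalso
  rw [ssum_eq] at h
  have h0 : Real.sin (p 0) = 0 := by
    nlinarith [sq_nonneg (Real.sin (p 0)), sq_nonneg (Real.sin (p 1)), sq_nonneg (Real.sin (p 2))]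
  have h1 : Real.sin (p 1) = 0 := by
    nlinarith [sq_nonneg (Real.sin (p 0)), sq_nonneg (Real.sin (p 1)), sq_nonneg (Real.sin (p 2))]
  have h2 : Real.sin (p 2) = 0 := by
    nlinarith [sq_nonneg (Real.sin (p 0)), sq_nonneg (Real.sin (p 1)), sq_nonneg (Real.sin (p 2))]
  have he := e3_eq p
  rw [csum] at he
  obtain ⟨hl, hr⟩ := abs_le.mp hb
  rcases sin_zero_cos_sq h0 with h0' | h0' <;> rcases sin_zero_cos_sq h1 with h1' | h1' <;>
    rcases sin_zero_cos_sq h2 with h2' | h2' <;> rw [h0', h1', h2'] at he <;> linarith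

/-! ### The cross product does not vanish on the constraint set -/

lemma cvec_ne_zero {Λ : ℝ} (hΛ0 : 0 < Λ) (p : E3) (hss : 0 < ssum p) (hM : Mf p = 0)
    (h1 : Λ ≤ |e3 p - 3|) (h2 : |e3 p - 3| ≤ 1 - Λ) : toE3 (cvec p) ≠ 0 := by
  intro hzero
  have hcomp : ∀ i, cvec p i = 0 := fun i => by
    rw [← toE3_apply (cvec p) i, hzero]; rfl
  set x := Real.cos (p 0) with hxdef
  set y := Real.cos (p 1) with hydef
  set z := Real.cos (p 2) with hzdef
  have habs : |x + y + z| = |e3 p - 3| := by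
    rw [e3_eq p, csum, show 3 - (x + y + z) - 3 = -(x+y+z) from by ring, abs_neg]
  rw [← habs] at h1 h2
  have hσ : ∀ t : ℝ, Real.cos t * csum p < 1 := by
    intro t
    have hbd : |Real.cos t * csum p| ≤ |x + y + z| := by
      rw [abs_mul, csum]
      calc |Real.cos t| * |x + y + z| ≤ 1 * |x + y + z| := by
            apply mul_le_mul_of_nonneg_right (Real.abs_cos_le_one t) (abs_nonneg _)
        _ = |x + y + z| := one_mul _
    have := le_abs_self (Real.cos t * csum p)
    linarith [hΛ0, h2, hbd]
  have hfac : ∀ t : ℝ, (1 : ℝ) - Real.cos t * csum p ≠ 0 := fun t => by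
    have := hσ t; intro h; linarith [h]
  -- extract the three conditions
  have hA : y^2 = 1 ∨ z^2 = 1 ∨ y = z := by
    have h0 := hcomp 0
    simp only [cvec, Matrix.cons_val_zero] at h0
    rcases mul_eq_zero.mp h0 with h' | h'
    · rcases mul_eq_zero.mp h' with h'' | h''
      · rcases mul_eq_zero.mp h'' with hs1 | hs2
        · have := Real.sin_sq_add_cos_sq (p 1)
          left; rw [hs1] at this; linarith [this]
        · have := Real.sin_sq_add_cos_sq (p 2)
          right; left; rw [hs2] at this; linarith [this]
      · right; right; linarith [sub_eq_zero.mp h'']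
    · exact absurd h' (hfac (p 0))
  have hB : x^2 = 1 ∨ z^2 = 1 ∨ x = z := by
    have h0 := hcomp 1
    simp only [cvec, Matrix.cons_val_one, Matrix.head_cons] at h0
    rcases mul_eq_zero.mp h0 with h' | h'
    · rcases mul_eq_zero.mp h' with h'' | h''
      · rcases mul_eq_zero.mp h'' with hs1 | hs2
        · have := Real.sin_sq_add_cos_sq (p 0)
          left; rw [hs1] at this; linarith [this]
        · have := Real.sin_sq_add_cos_sq (p 2)
          right; left; rw [hs2] at this; linarith [this]
      · right; right; linarith [sub_eq_zero.mp h'']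
    · exact absurd h' (hfac (p 1))
  have hC : x^2 = 1 ∨ y^2 = 1 ∨ x = y := by
    have h0 := hcomp 2
    simp only [cvec, Matrix.cons_val_two, Matrix.tail_cons, Matrix.head_cons] at h0
    rcases mul_eq_zero.mp h0 with h' | h'
    · rcases mul_eq_zero.mp h' with h'' | h''
      · rcases mul_eq_zero.mp h'' with hs1 | hs2
        · have := Real.sin_sq_add_cos_sq (p 0)
          left; rw [hs1] at this; linarith [this]
        · have := Real.sin_sq_add_cos_sq (p 1)
          right; left; rw [hs2] at this; linarith [this]
      · right; right; linarith [sub_eq_zero.mp h'']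
    · exact absurd h' (hfac (p 2))
  have e0 : Real.sin (p 0) ^ 2 = 1 - x^2 := Real.sin_sq (p 0)
  have e1 : Real.sin (p 1) ^ 2 = 1 - y^2 := Real.sin_sq (p 1)
  have e2 : Real.sin (p 2) ^ 2 = 1 - z^2 := Real.sin_sq (p 2)
  have hM' : (1-x^2)*y*z + (1-y^2)*x*z + (1-z^2)*x*y = 0 := by
    rw [Mf] at hM
    linear_combination hM - y*z*e0 - x*z*e1 - x*y*e2
  have hs3 : x^2 + y^2 + z^2 < 3 := by
    have : ssum p = 3 - (x^2 + y^2 + z^2) := by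
      rw [ssum_eq, e0, e1, e2]; ring
    linarith [hss, this]
  exact algKey Λ x y z hΛ0 (cos_sq_le_one' (p 0)) (cos_sq_le_one' (p 1)) (cos_sq_le_one' (p 2))
    h1 h2 hM' hA hB hC hs3

/-! ### Continuity -/

lemma cont_coord (i : Fin 3) : Continuous fun p : E3 => p i :=
  (EuclideanSpace.proj i : E3 →L[ℝ] ℝ).continuous

lemma cont_sin (i : Fin 3) : Continuous fun p : E3 => Real.sin (p i) :=
  Real.continuous_sin.comp (cont_coord i)

lemma cont_cos (i : Fin 3) : Continuous fun p : E3 => Real.cos (p i) :=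
  Real.continuous_cos.comp (cont_coord i)

lemma cont_csum : Continuous csum :=
  ((cont_cos 0).add (cont_cos 1)).add (cont_cos 2)

lemma cont_e3 : Continuous e3 := by
  have : e3 = fun p : E3 => 3 - csum p := funext e3_eq
  rw [this]
  exact continuous_const.sub cont_csum

lemma cont_Mf : Continuous Mf := by
  unfold Mf
  exact (((((cont_sin 0).pow 2).mul (cont_cos 1)).mul (cont_cos 2)).add
    (((((cont_sin 1).pow 2).mul (cont_cos 0)).mul (cont_cos 2)).add
     ((((cont_sin 2).pow 2).mul (cont_cos 0)).mul (cont_cos 1)))).congr fun p => by simp only [Pi.mul_apply, Pi.pow_apply, Pi.add_apply]; ring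

lemma cont_cvecE : Continuous fun p : E3 => toE3 (cvec p) := by
  refine Continuous.comp (EuclideanSpace.equiv (Fin 3) ℝ).symm.continuous ?_
  refine continuous_pi fun i => ?_
  fin_cases i
  · show Continuous fun p : E3 => Real.sin (p 1) * Real.sin (p 2) *
      (Real.cos (p 2) - Real.cos (p 1)) * (1 - Real.cos (p 0) * csum p)
    exact (((cont_sin 1).mul (cont_sin 2)).mul ((cont_cos 2).sub (cont_cos 1))).mul
      (continuous_const.sub ((cont_cos 0).mul cont_csum))
  · show Continuous fun p : E3 => Real.sin (p 0) * Real.sin (p 2) *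
      (Real.cos (p 0) - Real.cos (p 2)) * (1 - Real.cos (p 1) * csum p)
    exact (((cont_sin 0).mul (cont_sin 2)).mul ((cont_cos 0).sub (cont_cos 2))).mul
      (continuous_const.sub ((cont_cos 1).mul cont_csum))
  · show Continuous fun p : E3 => Real.sin (p 0) * Real.sin (p 1) *
      (Real.cos (p 1) - Real.cos (p 0)) * (1 - Real.cos (p 2) * csum p)
    exact (((cont_sin 0).mul (cont_sin 1)).mul ((cont_cos 1).sub (cont_cos 0))).mul
      (continuous_const.sub ((cont_cos 2).mul cont_csum))

/-! ### Main theorem -/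

/-- For `a ∈ [2+Λ, 4−Λ]` with `|a−3| ≥ Λ` and `p ∈ [−π,π]³` with `e(p) = a`, `K(p) = 0`,
one has `|∇e(p) × ∇K(p)| ≥ c*_Λ > 0`. -/
theorem stmt10 (Λ : ℝ) (hΛ0 : 0 < Λ) (hΛ : Λ ≤ 1/2) :
    ∃ c : ℝ, 0 < c ∧ ∀ a ∈ Set.Icc (2 + Λ) (4 - Λ), Λ ≤ |a - 3| →
      ∀ p : E3, (∀ i, |p i| ≤ π) → e3 p = a → Kf p = 0 →
        0 < ssum p ∧ c ≤ ‖cross3 (gradE p) (gradient Kf p)‖ := by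
  classical
  set S : Set E3 := {p | (∀ i, |p i| ≤ π) ∧ Λ ≤ |e3 p - 3| ∧ |e3 p - 3| ≤ 1 - Λ ∧ Mf p = 0}
    with hSdef
  -- membership lemma
  have hmem : ∀ a ∈ Set.Icc (2 + Λ) (4 - Λ), Λ ≤ |a - 3| →
      ∀ p : E3, (∀ i, |p i| ≤ π) → e3 p = a → Kf p = 0 →
        p ∈ S ∧ 0 < ssum p ∧ Mf p = 0 := by
    intro a ha haΛ p hcube he hK
    have hb : |e3 p - 3| ≤ 1 - Λ := by
      rw [he]
      exact abs_le.mpr ⟨by linarith [ha.1], by linarith [ha.2]⟩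
    have hss := ssum_pos_of hΛ0 p hb
    have hM0 : Mf p = 0 := by
      rcases div_eq_zero_iff.mp hK with h | h
      · exact h
      · exact absurd h (pow_ne_zero _ (ne_of_gt hss))
    exact ⟨⟨hcube, by rw [he]; exact haΛ, hb, hM0⟩, hss, hM0⟩
  -- the norm function
  set F : E3 → ℝ := fun p => ‖toE3 (cvec p)‖ with hFdef
  have hFcont : Continuous F := continuous_norm.comp cont_cvecE
  -- compactness of S
  have hSclosed : IsClosed S := by
    have h1 : IsClosed {p : E3 | ∀ i, |p i| ≤ π} := by
      rw [show {p : E3 | ∀ i, |p i| ≤ π} = ⋂ i, {p : E3 | |p i| ≤ π} from by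
        ext p; simp [Set.mem_iInter]]
      exact isClosed_iInter fun i =>
        isClosed_le (continuous_abs.comp (cont_coord i)) continuous_const
    have h2 : IsClosed {p : E3 | Λ ≤ |e3 p - 3|} :=
      isClosed_le continuous_const (continuous_abs.comp (cont_e3.sub continuous_const))
    have h3 : IsClosed {p : E3 | |e3 p - 3| ≤ 1 - Λ} :=
      isClosed_le (continuous_abs.comp (cont_e3.sub continuous_const)) continuous_const
    have h4 : IsClosed {p : E3 | Mf p = 0} := isClosed_eq cont_Mf continuous_const
    exact (h1.inter (h2.inter (h3.inter h4)))
  have hSbdd : Bornology.IsBounded S := by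
    apply (Metric.isBounded_closedBall (x := (0 : E3)) (r := 7)).subset
    intro q hq
    rw [Metric.mem_closedBall, dist_zero_right, EuclideanSpace.norm_eq]
    have hbnd : ∀ i : Fin 3, ‖q i‖ ^ 2 ≤ 16 := fun i => by
      rw [Real.norm_eq_abs]
      have h1 := hq.1 i
      nlinarith [Real.pi_le_four, abs_nonneg (q i), Real.pi_pos]
    have hsum : ∑ i, ‖q i‖ ^ 2 ≤ 49 := by
      rw [Fin.sum_univ_three]
      linarith [hbnd 0, hbnd 1, hbnd 2]
    calc √(∑ i, ‖q i‖ ^ 2) ≤ √49 := Real.sqrt_le_sqrt hsum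
      _ = 7 := by
          rw [show (49:ℝ) = 7^2 by norm_num, Real.sqrt_sq (by norm_num : (0:ℝ) ≤ 7)]
  have hScompact : IsCompact S := Metric.isCompact_of_isClosed_isBounded hSclosed hSbdd
  by_cases hne : S.Nonempty
  · obtain ⟨p₀, hp₀S, hmin⟩ := hScompact.exists_isMinOn hne hFcont.continuousOn
    have hss₀ : 0 < ssum p₀ := ssum_pos_of hΛ0 p₀ hp₀S.2.2.1
    have hFp₀pos : 0 < F p₀ := by
      rw [hFdef]
      exact norm_pos_iff.mpr (cvec_ne_zero hΛ0 p₀ hss₀ hp₀S.2.2.2 hp₀S.2.1 hp₀S.2.2.1)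
    refine ⟨(1/9) * F p₀, by positivity, ?_⟩
    intro a ha haΛ p hcube he hK
    obtain ⟨hpS, hss, hM0⟩ := hmem a ha haΛ p hcube he hK
    refine ⟨hss, ?_⟩
    have hgrad : gradient Kf p = (ssum p ^ 2)⁻¹ • toE3 (gM p) :=
      (hasGradientAt_Kf p (ne_of_gt hss) hM0).gradient
    rw [hgrad, cross3_smul, cross_formula, norm_smul]
    have h3 : ssum p ≤ 3 := ssum_le_three p
    have hinv9 : (1/9 : ℝ) ≤ (ssum p ^ 2)⁻¹ := by
      have h9 : ssum p ^ 2 ≤ 9 := by nlinarith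
      have hpos : (0:ℝ) < ssum p ^ 2 := by positivity
      rw [one_div]
      exact inv_anti₀ hpos h9
    have hnorm : ‖(ssum p ^ 2)⁻¹‖ = (ssum p ^ 2)⁻¹ := by
      rw [Real.norm_eq_abs, abs_of_pos (by positivity)]
    rw [hnorm]
    have hFle : F p₀ ≤ F p := (isMinOn_iff.mp hmin) p hpS
    calc (1/9) * F p₀ ≤ (ssum p ^ 2)⁻¹ * F p :=
          mul_le_mul hinv9 hFle (le_of_lt hFp₀pos) (by positivity)
      _ = (ssum p ^ 2)⁻¹ * ‖toE3 (cvec p)‖ := rfl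
  · refine ⟨1, one_pos, ?_⟩
    intro a ha haΛ p hcube he hK
    obtain ⟨hpS, _, _⟩ := hmem a ha haΛ p hcube he hK
    exact absurd ⟨p, hpS⟩ hne
end
end

section
/- There exists a universal constant C such that sup_{a ∈ ℝ} ∫_{Σ_a} |∇e(p)|^{−1} dm_a(p) ≤ C, where Σ_a = {p ∈ [−π,π]³ : e(p) = a} and dm_a is the surface area measure on Σ_a (the 2-dimensional Hausdorff measure restricted to Σ_a). In particular, this integral is finite even for the critical values a ∈ {0, 2, 4, 6} of e, where |∇e| vanishes at the (finitely many) critical points lying on Σ_a. -/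
open MeasureTheory Real
open scoped ENNReal

noncomputable section

/-- The level set `Σ_a = {p ∈ [−π,π]³ : e(p) = a}`. -/
def SigmaA (a : ℝ) : Set E3 := {p | (∀ i, |p i| ≤ π) ∧ e3 p = a}


lemma cos_diff_eq {x y : ℝ} : cos y - cos x = 2 * sin ((x+y)/2) * sin ((x-y)/2) := by
  rw [Real.cos_sub_cos, show (y+x)/2 = (x+y)/2 by ring, show (y-x)/2 = -((x-y)/2) by ring,
    Real.sin_neg]; ring

lemma cos_diff_upper {x y : ℝ} (h0 : 0 ≤ y) (hxy : y ≤ x) (h2 : x ≤ π/2) :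
    cos y - cos x ≤ x * (x - y) := by
  rw [cos_diff_eq]
  have h1 : sin ((x+y)/2) ≤ (x+y)/2 := Real.sin_le (by linarith)
  have h2' : sin ((x-y)/2) ≤ (x-y)/2 := Real.sin_le (by linarith)
  have hnn1 : 0 ≤ sin ((x+y)/2) :=
    Real.sin_nonneg_of_nonneg_of_le_pi (by linarith) (by linarith [Real.pi_pos])
  have hnn2 : 0 ≤ sin ((x-y)/2) :=
    Real.sin_nonneg_of_nonneg_of_le_pi (by linarith) (by linarith [Real.pi_pos])
  nlinarith [Real.pi_pos]

lemma cos_diff_lower {x y : ℝ} (h0 : 0 ≤ y) (hxy : y ≤ x) (h2 : x ≤ π/2) :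
    2/π^2 * (x * (x - y)) ≤ cos y - cos x := by
  rw [cos_diff_eq]
  have hpi := Real.pi_pos
  have h1 : 2/π * ((x+y)/2) ≤ sin ((x+y)/2) := Real.mul_le_sin (by linarith) (by linarith)
  have h2' : 2/π * ((x-y)/2) ≤ sin ((x-y)/2) := Real.mul_le_sin (by linarith) (by linarith)
  have ha : 0 ≤ 2/π * ((x+y)/2) := mul_nonneg (by positivity) (by linarith)
  have hb : 0 ≤ 2/π * ((x-y)/2) := mul_nonneg (by positivity) (by linarith)
  have key : 2 * (2/π * ((x+y)/2)) * (2/π * ((x-y)/2)) ≤ 2 * sin ((x+y)/2) * sin ((x-y)/2) := by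
    have := mul_le_mul h1 h2' hb (le_trans ha h1)
    nlinarith
  refine le_trans ?_ key
  have hrw : 2 * (2/π * ((x+y)/2)) * (2/π * ((x-y)/2)) = 2 * ((x+y)*(x-y)) / π^2 := by
    field_simp
  have hrw2 : 2/π^2 * (x * (x - y)) = 2 * (x*(x-y)) / π^2 := by ring
  rw [hrw, hrw2, div_le_div_iff_of_pos_right (by positivity)]
  nlinarith [mul_nonneg h0 (sub_nonneg.2 hxy)]

lemma abs_cos_diff_upper {x y : ℝ} (hx0 : 0 ≤ x) (hx2 : x ≤ π/2) (hy0 : 0 ≤ y) (hy2 : y ≤ π/2) :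
    |cos x - cos y| ≤ max x y * |x - y| := by
  have hpi := Real.pi_pos
  rcases le_total y x with h | h
  · have hc : cos x ≤ cos y := Real.cos_le_cos_of_nonneg_of_le_pi hy0 (by linarith) h
    rw [abs_of_nonpos (sub_nonpos.2 hc), max_eq_left h, abs_of_nonneg (sub_nonneg.2 h)]
    have := cos_diff_upper hy0 h hx2; linarith
  · have hc : cos y ≤ cos x := Real.cos_le_cos_of_nonneg_of_le_pi hx0 (by linarith) h
    rw [abs_of_nonneg (sub_nonneg.2 hc), max_eq_right h, abs_of_nonpos (sub_nonpos.2 h)]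
    have := cos_diff_upper hx0 h hy2; linarith

lemma abs_cos_diff_lower {x y : ℝ} (hx0 : 0 ≤ x) (hx2 : x ≤ π/2) (hy0 : 0 ≤ y) (hy2 : y ≤ π/2) :
    2/π^2 * (max x y * |x - y|) ≤ |cos x - cos y| := by
  have hpi := Real.pi_pos
  rcases le_total y x with h | h
  · have hc : cos x ≤ cos y := Real.cos_le_cos_of_nonneg_of_le_pi hy0 (by linarith) h
    rw [abs_of_nonpos (sub_nonpos.2 hc), max_eq_left h, abs_of_nonneg (sub_nonneg.2 h)]
    have := cos_diff_lower hy0 h hx2; linarith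
  · have hc : cos y ≤ cos x := Real.cos_le_cos_of_nonneg_of_le_pi hx0 (by linarith) h
    rw [abs_of_nonneg (sub_nonneg.2 hc), max_eq_right h, abs_of_nonpos (sub_nonpos.2 h)]
    have := cos_diff_lower hx0 h hy2; linarith

lemma two_point (η : Fin 3 → ℝ) (hη : ∀ i, η i = 1 ∨ η i = -1)
    {q q' : Fin 3 → ℝ} (j : Fin 3)
    (hq0 : ∀ i, 0 ≤ q i) (hq2 : ∀ i, q i ≤ π/2)
    (hq0' : ∀ i, 0 ≤ q' i) (hq2' : ∀ i, q' i ≤ π/2)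
    (hmax : ∀ i, q i ≤ q j) (hmax' : ∀ i, q' i ≤ q' j)
    (he : ∑ i, η i * (1 - cos (q i)) = ∑ i, η i * (1 - cos (q' i))) :
    |q j - q' j| ≤ π^2 * ∑ i ∈ Finset.univ.erase j, |q i - q' i| := by
  classical
  have hpi := Real.pi_pos
  set M := max (q j) (q' j) with hM
  have habs : ∀ i, |η i| = 1 := by intro i; rcases hη i with h | h <;> simp [h]
  -- sum identity
  have hsum : ∀ (r : Fin 3 → ℝ), ∑ i, η i * (1 - cos (r i)) =
      η j * (1 - cos (r j)) + ∑ i ∈ Finset.univ.erase j, η i * (1 - cos (r i)) := by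
    intro r
    rw [← Finset.add_sum_erase _ _ (Finset.mem_univ j)]
  have key : η j * (cos (q' j) - cos (q j)) =
      ∑ i ∈ Finset.univ.erase j, η i * (cos (q i) - cos (q' i)) := by
    have h1 := he
    rw [hsum q, hsum q'] at h1
    have : η j * (1 - cos (q j)) - η j * (1 - cos (q' j)) =
        ∑ i ∈ Finset.univ.erase j, (η i * (1 - cos (q' i)) - η i * (1 - cos (q i))) := by
      rw [Finset.sum_sub_distrib]; linarith
    rw [show η j * (cos (q' j) - cos (q j)) =
      η j * (1 - cos (q j)) - η j * (1 - cos (q' j)) by ring, this]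
    apply Finset.sum_congr rfl; intro i _; ring
  have lhs_eq : |cos (q j) - cos (q' j)| = |η j * (cos (q' j) - cos (q j))| := by
    rw [abs_mul, habs j, one_mul, abs_sub_comm]
  have step1 : |cos (q j) - cos (q' j)| ≤
      ∑ i ∈ Finset.univ.erase j, |cos (q i) - cos (q' i)| := by
    rw [lhs_eq, key]
    refine (Finset.abs_sum_le_sum_abs _ _).trans ?_
    apply Finset.sum_le_sum; intro i _
    rw [abs_mul, habs i, one_mul]
  have step2 : ∑ i ∈ Finset.univ.erase j, |cos (q i) - cos (q' i)|
      ≤ M * ∑ i ∈ Finset.univ.erase j, |q i - q' i| := by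
    rw [Finset.mul_sum]
    apply Finset.sum_le_sum; intro i _
    refine (abs_cos_diff_upper (hq0 i) (hq2 i) (hq0' i) (hq2' i)).trans ?_
    have h1 : max (q i) (q' i) ≤ M := max_le_max (hmax i) (hmax' i)
    have h2 : (0:ℝ) ≤ |q i - q' i| := abs_nonneg _
    exact mul_le_mul_of_nonneg_right h1 h2
  have step0 : 2/π^2 * (M * |q j - q' j|) ≤ |cos (q j) - cos (q' j)| :=
    abs_cos_diff_lower (hq0 j) (hq2 j) (hq0' j) (hq2' j)
  rcases eq_or_lt_of_le (show (0:ℝ) ≤ M from le_trans (hq0 j) (le_max_left _ _)) with hM0 | hM0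
  · have h1 : q j = 0 := le_antisymm ((le_max_left (q j) (q' j)).trans hM0.symm.le) (hq0 j)
    have h2 : q' j = 0 := le_antisymm ((le_max_right (q j) (q' j)).trans hM0.symm.le) (hq0' j)
    rw [h1, h2, sub_zero, abs_zero]
    have hs : 0 ≤ ∑ i ∈ Finset.univ.erase j, |q i - q' i| :=
      Finset.sum_nonneg fun i _ => abs_nonneg _
    positivity
  · have main : 2/π^2 * (M * |q j - q' j|) ≤ M * ∑ i ∈ Finset.univ.erase j, |q i - q' i| :=
      le_trans step0 (le_trans step1 step2)
    have hMpos : 0 < M := hM0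
    have : 2/π^2 * |q j - q' j| ≤ ∑ i ∈ Finset.univ.erase j, |q i - q' i| := by
      rw [show 2/π^2 * (M * |q j - q' j|) = M * (2/π^2 * |q j - q' j|) by ring] at main
      exact le_of_mul_le_mul_left main hMpos
    have hπ2 : (0:ℝ) < π^2 := by positivity
    calc |q j - q' j| = (π^2/2) * (2/π^2 * |q j - q' j|) := by field_simp
      _ ≤ (π^2/2) * ∑ i ∈ Finset.univ.erase j, |q i - q' i| := by
          apply mul_le_mul_of_nonneg_left this (by positivity)
      _ ≤ π^2 * ∑ i ∈ Finset.univ.erase j, |q i - q' i| := by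
          have hs : 0 ≤ ∑ i ∈ Finset.univ.erase j, |q i - q' i| :=
            Finset.sum_nonneg fun i _ => abs_nonneg _
          nlinarith

def S_set (η : Fin 3 → ℝ) (b ℓ : ℝ) (j : Fin 3) : Set E3 :=
  {q | (∀ i, q i ∈ Set.Icc 0 ℓ) ∧ (∀ i, q i ≤ q j) ∧ ∑ i, η i * (1 - Real.cos (q i)) = b}

def oth (j : Fin 3) : Fin 2 → Fin 3 := ![if j = 0 then 1 else 0, if j = 2 then 1 else 2]

lemma master (η : Fin 3 → ℝ) (hη : ∀ i, η i = 1 ∨ η i = -1) (b ℓ : ℝ) (j : Fin 3)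
    (hℓ0 : 0 ≤ ℓ) (hℓ : ℓ ≤ π/2) :
    μH[2] (S_set η b ℓ j) ≤ 484 * (ENNReal.ofReal ℓ)^2 := by
  classical
  have hpi := Real.pi_pos
  set S := S_set η b ℓ j with hS
  set Pr : E3 → (Fin 2 → ℝ) := fun p k => p (oth j k) with hPr
  set A := Pr '' S with hA
  set G : (Fin 2 → ℝ) → E3 := Function.invFunOn Pr S with hG
  have hne : oth j 0 ≠ oth j 1 := by fin_cases j <;> decide
  have herase : Finset.univ.erase j = {oth j 0, oth j 1} := by fin_cases j <;> decide
  -- two point distance bound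
  have dist_bound : ∀ p ∈ S, ∀ p' ∈ S, dist p p' ≤ 22 * dist (Pr p) (Pr p') := by
    intro p hp p' hp'
    obtain ⟨hbox, hmax, hsum⟩ := hp
    obtain ⟨hbox', hmax', hsum'⟩ := hp'
    have htp := two_point η hη j (fun i => (hbox i).1) (fun i => (hbox i).2.trans hℓ)
      (fun i => (hbox' i).1) (fun i => (hbox' i).2.trans hℓ) hmax hmax'
      (by rw [hsum, hsum'])
    have hsum2 : ∑ i ∈ Finset.univ.erase j, |p i - p' i|
        = |p (oth j 0) - p' (oth j 0)| + |p (oth j 1) - p' (oth j 1)| := by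
      rw [herase, Finset.sum_pair hne]
    have hd1 : |p (oth j 0) - p' (oth j 0)| ≤ dist (Pr p) (Pr p') := by
      have := dist_le_pi_dist (Pr p) (Pr p') 0
      simpa [hPr, Real.dist_eq] using this
    have hd2 : |p (oth j 1) - p' (oth j 1)| ≤ dist (Pr p) (Pr p') := by
      have := dist_le_pi_dist (Pr p) (Pr p') 1
      simpa [hPr, Real.dist_eq] using this
    have heu : dist p p' ≤ ∑ i, |p i - p' i| := by
      rw [EuclideanSpace.dist_eq]
      have h1 : ∑ i, dist (p i) (p' i) ^ 2 ≤ (∑ i, |p i - p' i|)^2 := by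
        simp only [Real.dist_eq, Fin.sum_univ_three]
        nlinarith [abs_nonneg (p 0 - p' 0), abs_nonneg (p 1 - p' 1), abs_nonneg (p 2 - p' 2),
          sq_abs (p 0 - p' 0), sq_abs (p 1 - p' 1), sq_abs (p 2 - p' 2)]
      refine (Real.sqrt_le_sqrt h1).trans ?_
      rw [Real.sqrt_sq (Finset.sum_nonneg fun i _ => abs_nonneg _)]
    have hsplit : ∑ i, |p i - p' i| = |p j - p' j| + ∑ i ∈ Finset.univ.erase j, |p i - p' i| := by
      rw [← Finset.add_sum_erase _ _ (Finset.mem_univ j)]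
    have hpisq : π^2 ≤ 10 := by nlinarith [Real.pi_lt_d2]
    have hdnn : (0:ℝ) ≤ dist (Pr p) (Pr p') := dist_nonneg
    calc dist p p' ≤ ∑ i, |p i - p' i| := heu
      _ = |p j - p' j| + ∑ i ∈ Finset.univ.erase j, |p i - p' i| := hsplit
      _ ≤ (π^2 + 1) * ∑ i ∈ Finset.univ.erase j, |p i - p' i| := by
          have hs : 0 ≤ ∑ i ∈ Finset.univ.erase j, |p i - p' i| :=
            Finset.sum_nonneg fun i _ => abs_nonneg _
          nlinarith
      _ ≤ (π^2 + 1) * (2 * dist (Pr p) (Pr p')) := by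
          apply mul_le_mul_of_nonneg_left _ (by positivity)
          rw [hsum2]; linarith
      _ ≤ 22 * dist (Pr p) (Pr p') := by nlinarith
  have hGy : ∀ y ∈ A, G y ∈ S ∧ Pr (G y) = y := by
    intro y hy
    obtain ⟨p, hp, rfl⟩ := hy
    exact ⟨Function.invFunOn_mem ⟨p, hp, rfl⟩, Function.invFunOn_eq ⟨p, hp, rfl⟩⟩
  have hGlip : LipschitzOnWith 22 G A := by
    apply LipschitzOnWith.of_dist_le_mul
    intro y hy y' hy'
    obtain ⟨hGyS, hGyP⟩ := hGy y hy
    obtain ⟨hGyS', hGyP'⟩ := hGy y' hy'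
    have := dist_bound _ hGyS _ hGyS'
    rw [hGyP, hGyP'] at this
    simpa using this
  have hSsub : S ⊆ G '' A := by
    intro p hp
    refine ⟨Pr p, Set.mem_image_of_mem _ hp, ?_⟩
    obtain ⟨hGS, hGP⟩ := hGy (Pr p) (Set.mem_image_of_mem _ hp)
    have hd := dist_bound _ hGS _ hp
    rw [hGP] at hd
    simp only [dist_self, mul_zero] at hd
    exact dist_le_zero.mp hd
  have hAsub : A ⊆ Set.univ.pi (fun _ : Fin 2 => Set.Icc (0:ℝ) ℓ) := by
    rintro y ⟨p, hp, rfl⟩ k _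
    exact hp.1 (oth j k)
  have hμA : (μH[2] : Measure (Fin 2 → ℝ)) = volume := by
    have := MeasureTheory.hausdorffMeasure_pi_real (ι := Fin 2)
    simpa using this
  have hvol : volume (Set.univ.pi (fun _ : Fin 2 => Set.Icc (0:ℝ) ℓ)) = (ENNReal.ofReal ℓ)^2 := by
    rw [volume_pi_pi]
    simp [Real.volume_Icc]
  calc μH[2] S ≤ μH[2] (G '' A) := measure_mono hSsub
    _ ≤ (22:ℝ≥0∞) ^ (2:ℝ) * μH[2] A := by
        simpa using hGlip.hausdorffMeasure_image_le (by norm_num : (0:ℝ) ≤ 2)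
    _ ≤ (22:ℝ≥0∞) ^ (2:ℝ) * (ENNReal.ofReal ℓ)^2 := by
        apply mul_le_mul_right
        rw [hμA] at *
        exact le_trans (measure_mono hAsub) hvol.le
    _ = 484 * (ENNReal.ofReal ℓ)^2 := by
        rw [show (2:ℝ) = ((2:ℕ):ℝ) by norm_num, ENNReal.rpow_natCast]
        norm_num

def ρm : Fin 4 → ℝ → ℝ := ![fun t => t, fun t => -t, fun t => π - t, fun t => π + t]

def ηm : Fin 4 → ℝ := ![1, 1, -1, -1]

def offm : Fin 4 → ℝ := ![0, 0, 2, 2]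

lemma F1 {t : ℝ} (ht : |t| ≤ π) : ∃ c, ρm c t = min |t| (π - |t|) := by
  rcases le_total 0 t with h | h
  · rcases le_total t (π - t) with h2 | h2
    · refine ⟨0, ?_⟩
      rw [abs_of_nonneg h, min_eq_left h2]; simp [ρm]
    · refine ⟨2, ?_⟩
      rw [abs_of_nonneg h, min_eq_right h2]; simp [ρm]
  · rcases le_total (-t) (π + t) with h2 | h2
    · refine ⟨1, ?_⟩
      rw [abs_of_nonpos h, min_eq_left (by linarith : -t ≤ π - -t)]; simp [ρm]
    · refine ⟨3, ?_⟩
      rw [abs_of_nonpos h, min_eq_right (by linarith : π - -t ≤ -t)]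
      simp [ρm]

lemma F2 (c : Fin 4) (t : ℝ) : 1 - Real.cos t = ηm c * (1 - Real.cos (ρm c t)) + offm c := by
  fin_cases c <;>
    simp [ρm, ηm, offm, Real.cos_pi_sub, Real.cos_add] <;> ring

lemma F2' (c : Fin 4) (t : ℝ) : ηm c * (1 - Real.cos (ρm c t)) = (1 - Real.cos t) - offm c := by
  rw [F2 c t]; ring

def ψm (w : Fin 3 → Fin 4) (p : E3) : E3 := toE3 fun i => ρm (w i) (p i)

lemma ψm_apply (w : Fin 3 → Fin 4) (p : E3) (i : Fin 3) : ψm w p i = ρm (w i) (p i) := rfl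

lemma ρm_dist (c : Fin 4) (s t : ℝ) : |ρm c s - ρm c t| = |s - t| := by
  fin_cases c <;> simp [ρm] <;>
    first
      | (rw [show -s + t = -(s - t) by ring, abs_neg])
      | (rw [abs_sub_comm])

lemma ηm_pm (c : Fin 4) : ηm c = 1 ∨ ηm c = -1 := by fin_cases c <;> simp [ηm]

lemma ψm_isometry (w : Fin 3 → Fin 4) : Isometry (ψm w) := by
  apply Isometry.of_dist_eq
  intro p p'
  rw [EuclideanSpace.dist_eq, EuclideanSpace.dist_eq]
  congr 1
  apply Finset.sum_congr rfl
  intro i _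
  rw [ψm_apply, ψm_apply, Real.dist_eq, Real.dist_eq, ρm_dist]

lemma ρm_surj (c : Fin 4) : Function.Surjective (ρm c) := by
  fin_cases c <;> intro y
  · exact ⟨y, rfl⟩
  · exact ⟨-y, by simp [ρm]⟩
  · exact ⟨π - y, by simp [ρm]⟩
  · exact ⟨y - π, by simp [ρm]⟩

lemma ψm_surj (w : Fin 3 → Fin 4) : Function.Surjective (ψm w) := by
  intro y
  have h := fun i => ρm_surj (w i) (y i)
  choose v hv using h
  refine ⟨toE3 v, ?_⟩
  apply (EuclideanSpace.equiv (Fin 3) ℝ).injective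
  funext i
  exact hv i

def NB (ℓ : ℝ) : Set E3 := {p | ∀ i, min |p i| (π - |p i|) ≤ ℓ}

lemma cover (a ℓ : ℝ) (hℓ0 : 0 ≤ ℓ) (hℓ : ℓ ≤ π/2) :
    μH[2] (SigmaA a ∩ NB ℓ) ≤ 92928 * (ENNReal.ofReal ℓ)^2 := by
  classical
  have hsub : SigmaA a ∩ NB ℓ ⊆ ⋃ wj : (Fin 3 → Fin 4) × Fin 3,
      (ψm wj.1) ⁻¹' (S_set (fun i => ηm (wj.1 i)) (a - ∑ i, offm (wj.1 i)) ℓ wj.2) := by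
    rintro p ⟨⟨hbox, hsum⟩, hNB⟩
    have h1 : ∀ i, ∃ c, ρm c (p i) = min |p i| (π - |p i|) := fun i => F1 (hbox i)
    choose w hw using h1
    have hq0 : ∀ i, 0 ≤ ρm (w i) (p i) := by
      intro i
      rw [hw i]
      exact le_min (abs_nonneg _) (by linarith [hbox i])
    have hqℓ : ∀ i, ρm (w i) (p i) ≤ ℓ := by
      intro i
      rw [hw i]; exact hNB i
    obtain ⟨j, -, hj⟩ := Finset.exists_max_image Finset.univ
      (fun i => ρm (w i) (p i)) ⟨0, Finset.mem_univ 0⟩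
    refine Set.mem_iUnion.2 ⟨⟨w, j⟩, ?_⟩
    refine ⟨fun i => ⟨hq0 i, hqℓ i⟩, fun i => hj i (Finset.mem_univ i), ?_⟩
    have hF : ∀ i, ηm (w i) * (1 - Real.cos (ψm w p i)) = (1 - Real.cos (p i)) - offm (w i) :=
      fun i => F2' (w i) (p i)
    rw [Finset.sum_congr rfl (fun i _ => hF i), Finset.sum_sub_distrib]
    have he : ∑ i, (1 - Real.cos (p i)) = a := hsum
    rw [he]
  refine (measure_mono hsub).trans ((measure_iUnion_le _).trans ?_)
  have hb : ∀ wj : (Fin 3 → Fin 4) × Fin 3,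
      μH[2] ((ψm wj.1) ⁻¹' (S_set (fun i => ηm (wj.1 i)) (a - ∑ i, offm (wj.1 i)) ℓ wj.2))
        ≤ 484 * (ENNReal.ofReal ℓ)^2 := by
    intro wj
    rw [(ψm_isometry wj.1).hausdorffMeasure_preimage (Or.inr (ψm_surj wj.1)),
      (ψm_surj wj.1).range_eq, Set.inter_univ]
    exact master _ (fun i => ηm_pm (wj.1 i)) _ _ _ hℓ0 hℓ
  calc ∑' wj : (Fin 3 → Fin 4) × Fin 3, μH[2] ((ψm wj.1) ⁻¹'
        (S_set (fun i => ηm (wj.1 i)) (a - ∑ i, offm (wj.1 i)) ℓ wj.2))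
      ≤ ∑' _wj : (Fin 3 → Fin 4) × Fin 3, 484 * (ENNReal.ofReal ℓ)^2 := ENNReal.tsum_le_tsum hb
    _ = 92928 * (ENNReal.ofReal ℓ)^2 := by
        rw [tsum_fintype]
        rw [Finset.sum_const, Finset.card_univ]
        have hcard : Fintype.card ((Fin 3 → Fin 4) × Fin 3) = 192 := by
          rw [Fintype.card_prod, Fintype.card_fun]
          simp
        rw [hcard, nsmul_eq_mul]
        norm_num
        ring

lemma sin_abs_eq {t : ℝ} (ht : |t| ≤ π) : Real.sin |t| = |Real.sin t| := by
  rcases le_total 0 t with h | h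
  · rw [abs_of_nonneg h, abs_of_nonneg (Real.sin_nonneg_of_nonneg_of_le_pi h
      (by rwa [abs_of_nonneg h] at ht))]
  · rw [abs_of_nonpos h, Real.sin_neg,
      abs_of_nonpos (by
        have : 0 ≤ Real.sin (-t) := Real.sin_nonneg_of_nonneg_of_le_pi (by linarith)
          (by rwa [abs_of_nonpos h] at ht)
        rw [Real.sin_neg] at this; linarith)]

lemma minsin {t : ℝ} (ht : |t| ≤ π) : min |t| (π - |t|) ≤ (π/2) * |Real.sin t| := by
  have hpi := Real.pi_pos
  rw [← sin_abs_eq ht]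
  rcases le_total |t| (π/2) with h | h
  · refine (min_le_left _ _).trans ?_
    have h2 := Real.mul_le_sin (abs_nonneg t) h
    have h3 := mul_le_mul_of_nonneg_left h2 (by positivity : (0:ℝ) ≤ π/2)
    have h4 : π/2 * (2/π * |t|) = |t| := by field_simp
    linarith
  · refine (min_le_right _ _).trans ?_
    have h1 : Real.sin |t| = Real.sin (π - |t|) := by rw [Real.sin_pi_sub]
    have h2 := Real.mul_le_sin (by linarith : (0:ℝ) ≤ π - |t|) (by linarith)
    have h3 := mul_le_mul_of_nonneg_left h2 (by positivity : (0:ℝ) ≤ π/2)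
    have h4 : π/2 * (2/π * (π - |t|)) = π - |t| := by field_simp
    rw [h1]
    linarith

lemma coord_le_norm (p : E3) (i : Fin 3) : |Real.sin (p i)| ≤ ‖gradE p‖ := by
  have hg : ∀ j, gradE p j = Real.sin (p j) := fun j => rfl
  rw [EuclideanSpace.norm_eq]
  rw [show |Real.sin (p i)| = Real.sqrt (‖gradE p i‖^2) by
    rw [Real.sqrt_sq_eq_abs, hg i, Real.norm_eq_abs, abs_abs]]
  apply Real.sqrt_le_sqrt
  exact Finset.single_le_sum (fun j _ => sq_nonneg ‖gradE p j‖) (Finset.mem_univ i)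

lemma gradE_cont : Continuous fun p : E3 => ‖gradE p‖ := by
  have h1 : Continuous fun p : E3 => (fun i => Real.sin (p i) : Fin 3 → ℝ) :=
    continuous_pi fun i => Real.continuous_sin.comp
      ((continuous_apply i).comp (EuclideanSpace.equiv (Fin 3) ℝ).continuous)
  have h2 : Continuous (gradE ·) :=
    ((EuclideanSpace.equiv (Fin 3) ℝ).symm.continuous).comp h1
  exact continuous_norm.comp h2

lemma sigma_sub_NB (a : ℝ) : SigmaA a ⊆ NB (π/2) := by
  intro p hp i
  rcases le_total |p i| (π/2) with h | h
  · exact (min_le_left _ _).trans h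
  · exact (min_le_right _ _).trans (by linarith)

lemma shell (a : ℝ) (m : ℕ) :
    μH[2] ({p : E3 | ‖gradE p‖ ≤ (1/2)^m} ∩ SigmaA a) ≤
      371712 * ((2:ℝ≥0∞)⁻¹)^m * ((2:ℝ≥0∞)⁻¹)^m := by
  have hpi := Real.pi_pos
  have hsub : {p : E3 | ‖gradE p‖ ≤ (1/2)^m} ∩ SigmaA a ⊆
      SigmaA a ∩ NB (π/2 * (1/2)^m) := by
    rintro p ⟨hpg, hpa⟩
    refine ⟨hpa, fun i => ?_⟩
    refine (minsin (hpa.1 i)).trans ?_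
    have h1 : |Real.sin (p i)| ≤ (1/2)^m := (coord_le_norm p i).trans hpg
    nlinarith [abs_nonneg (Real.sin (p i))]
  refine (measure_mono hsub).trans ?_
  have hl0 : (0:ℝ) ≤ π/2 * (1/2)^m := by positivity
  have hl2 : π/2 * (1/2)^m ≤ π/2 := by
    nlinarith [pow_le_one₀ (by norm_num : (0:ℝ) ≤ 1/2) (by norm_num : (1:ℝ)/2 ≤ 1) (n := m),
      pow_nonneg (by norm_num : (0:ℝ) ≤ 1/2) m]
  refine (cover a _ hl0 hl2).trans ?_
  have hof : ENNReal.ofReal (π/2 * (1/2)^m) ≤ 2 * ((2:ℝ≥0∞)⁻¹)^m := by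
    rw [ENNReal.ofReal_mul (by linarith)]
    have h1 : ENNReal.ofReal (π/2) ≤ 2 := by
      rw [show (2:ℝ≥0∞) = ENNReal.ofReal 2 by simp]
      exact ENNReal.ofReal_le_ofReal (by nlinarith [Real.pi_le_four])
    have h2 : ENNReal.ofReal ((1/2:ℝ)^m) = ((2:ℝ≥0∞)⁻¹)^m := by
      rw [ENNReal.ofReal_pow (by norm_num)]
      congr 1
      rw [show (1/2:ℝ) = 2⁻¹ by norm_num,
        ENNReal.ofReal_inv_of_pos (by norm_num : (0:ℝ) < 2)]
      simp
    rw [h2]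
    exact mul_le_mul_left h1 _
  calc (92928:ℝ≥0∞) * (ENNReal.ofReal (π/2 * (1/2)^m))^2
      ≤ 92928 * (2 * ((2:ℝ≥0∞)⁻¹)^m)^2 := by
        apply mul_le_mul_right
        exact pow_le_pow_left' hof 2
    _ = 371712 * ((2:ℝ≥0∞)⁻¹)^m * ((2:ℝ≥0∞)⁻¹)^m := by ring

lemma geom_id (n : ℕ) : (1:ℝ≥0∞) + ∑ m ∈ Finset.range n, (2:ℝ≥0∞)^m = 2^n := by
  induction n with
  | zero => simp
  | succ k ih =>
    rw [Finset.sum_range_succ, ← add_assoc, ih, pow_succ]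
    ring

lemma dom_bound (p : E3) :
    ENNReal.ofReal (‖gradE p‖⁻¹) ≤
      1 + ∑' m : ℕ, ({q : E3 | ‖gradE q‖ ≤ (1/2)^m}).indicator (fun _ => (2:ℝ≥0∞)^m) p := by
  set x := ‖gradE p‖ with hx
  have hx0 : 0 ≤ x := norm_nonneg _
  rcases le_or_gt (x⁻¹) 1 with h | h
  · calc ENNReal.ofReal x⁻¹ ≤ ENNReal.ofReal 1 := ENNReal.ofReal_le_ofReal h
      _ = 1 := by simp
      _ ≤ _ := le_self_add
  · have hxpos : 0 < x := by
      by_contra hc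
      push_neg at hc
      have : x = 0 := le_antisymm hc hx0
      rw [this] at h; norm_num at h
    have hx1 : x < 1 := by
      have h2 := mul_lt_mul_of_pos_right h hxpos
      rw [inv_mul_cancel₀ hxpos.ne'] at h2
      simpa using h2
    have hex : ∃ n : ℕ, (1/2:ℝ)^(n+1) < x := by
      obtain ⟨k, hk⟩ := exists_pow_lt_of_lt_one hxpos (by norm_num : (1/2:ℝ) < 1)
      exact ⟨k, lt_of_le_of_lt (by
        apply pow_le_pow_of_le_one (by norm_num) (by norm_num)
        omega) hk⟩
    set M := Nat.find hex with hM
    have hMspec : (1/2:ℝ)^(M+1) < x := Nat.find_spec hex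
    have hmem : ∀ m ≤ M, x ≤ (1/2:ℝ)^m := by
      intro m hm
      rcases Nat.eq_zero_or_pos m with rfl | hmpos
      · simpa using hx1.le
      · obtain ⟨k, rfl⟩ := Nat.exists_eq_succ_of_ne_zero hmpos.ne'
        have := Nat.find_min hex (show k < M by omega)
        push_neg at this
        simpa using this
    have hsum : ∑ m ∈ Finset.range (M+1), (2:ℝ≥0∞)^m ≤
        ∑' m : ℕ, ({q : E3 | ‖gradE q‖ ≤ (1/2)^m}).indicator (fun _ => (2:ℝ≥0∞)^m) p := by
      refine le_trans ?_ (ENNReal.sum_le_tsum (Finset.range (M+1)))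
      apply Finset.sum_le_sum
      intro m hm
      rw [Set.indicator_of_mem]
      exact hmem m (by simpa using Nat.lt_succ_iff.mp (Finset.mem_range.mp hm))
    have hlhs : ENNReal.ofReal x⁻¹ ≤ (2:ℝ≥0∞)^(M+1) := by
      have h1 : x⁻¹ ≤ (2:ℝ)^(M+1) := by
        have h2 : ((1/2:ℝ)^(M+1))⁻¹ = 2^(M+1) := by
          rw [show (1/2:ℝ) = 2⁻¹ by norm_num, inv_pow, inv_inv]
        have := inv_anti₀ (by positivity) hMspec.le
        rwa [h2] at this
      calc ENNReal.ofReal x⁻¹ ≤ ENNReal.ofReal ((2:ℝ)^(M+1)) := ENNReal.ofReal_le_ofReal h1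
        _ = (2:ℝ≥0∞)^(M+1) := by
          rw [ENNReal.ofReal_pow (by norm_num)]
          norm_num
    calc ENNReal.ofReal x⁻¹ ≤ (2:ℝ≥0∞)^(M+1) := hlhs
      _ = 1 + ∑ m ∈ Finset.range (M+1), (2:ℝ≥0∞)^m := (geom_id (M+1)).symm
      _ ≤ _ := add_le_add_right hsum 1

/-- `sup_a ∫_{Σ_a} |∇e(p)|⁻¹ dm_a(p) ≤ C` for a universal constant `C`, where `dm_a`
is the 2-dimensional Hausdorff measure restricted to `Σ_a`. -/
theorem stmt18 :
    ∃ C : ℝ, 0 < C ∧ ∀ a : ℝ,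
      ∫⁻ p in SigmaA a, ENNReal.ofReal (‖gradE p‖⁻¹) ∂μH[2] ≤ ENNReal.ofReal C := by
  refine ⟨2000000, by norm_num, fun a => ?_⟩
  have hpi := Real.pi_pos
  set D : ℕ → Set E3 := fun m => {q : E3 | ‖gradE q‖ ≤ (1/2)^m} with hDdef
  have hDmeas : ∀ m, MeasurableSet (D m) := fun m =>
    (isClosed_le gradE_cont continuous_const).measurableSet
  have hof2 : ENNReal.ofReal (π/2) ≤ 2 := by
    rw [show (2:ℝ≥0∞) = ENNReal.ofReal 2 by simp]
    exact ENNReal.ofReal_le_ofReal (by nlinarith [Real.pi_le_four])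
  have hmuS : μH[2] (SigmaA a) ≤ 371712 := by
    have h1 : SigmaA a = SigmaA a ∩ NB (π/2) := (Set.inter_eq_left.mpr (sigma_sub_NB a)).symm
    rw [h1]
    refine (cover a (π/2) (by positivity) le_rfl).trans ?_
    calc (92928:ℝ≥0∞) * (ENNReal.ofReal (π/2))^2 ≤ 92928 * 2^2 :=
          mul_le_mul_right (pow_le_pow_left' hof2 2) _
      _ = 371712 := by norm_num
  have e2 : ∀ m, ∫⁻ p in SigmaA a, (D m).indicator (fun _ => (2:ℝ≥0∞)^m) p ∂μH[2]
      = (2:ℝ≥0∞)^m * μH[2] (D m ∩ SigmaA a) := by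
    intro m
    rw [lintegral_indicator (hDmeas m), setLIntegral_const,
      Measure.restrict_apply (hDmeas m)]
  have shell' : ∀ m : ℕ, (2:ℝ≥0∞)^m * μH[2] (D m ∩ SigmaA a) ≤ 371712 * ((2:ℝ≥0∞)⁻¹)^m := by
    intro m
    refine (mul_le_mul_right (shell a m) _).trans_eq ?_
    have hc : (2:ℝ≥0∞)^m * ((2:ℝ≥0∞)⁻¹)^m = 1 := by
      rw [← mul_pow, ENNReal.mul_inv_cancel (by norm_num) (by norm_num), one_pow]
    calc (2:ℝ≥0∞)^m * (371712 * ((2:ℝ≥0∞)⁻¹)^m * ((2:ℝ≥0∞)⁻¹)^m)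
        = (371712 * ((2:ℝ≥0∞)⁻¹)^m) * ((2:ℝ≥0∞)^m * ((2:ℝ≥0∞)⁻¹)^m) := by ring
      _ = 371712 * ((2:ℝ≥0∞)⁻¹)^m := by rw [hc, mul_one]
  calc ∫⁻ p in SigmaA a, ENNReal.ofReal (‖gradE p‖⁻¹) ∂μH[2]
      ≤ ∫⁻ p in SigmaA a, (1 + ∑' m : ℕ, (D m).indicator (fun _ => (2:ℝ≥0∞)^m) p) ∂μH[2] :=
        lintegral_mono dom_bound
    _ = μH[2] (SigmaA a)
        + ∑' m : ℕ, ∫⁻ p in SigmaA a, (D m).indicator (fun _ => (2:ℝ≥0∞)^m) p ∂μH[2] := by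
        rw [lintegral_add_left measurable_const,
          lintegral_tsum (fun m => (measurable_const.indicator (hDmeas m)).aemeasurable)]
        congr 1
        exact setLIntegral_one _
    _ ≤ 371712 + ∑' m : ℕ, 371712 * ((2:ℝ≥0∞)⁻¹)^m := by
        refine add_le_add hmuS (ENNReal.tsum_le_tsum fun m => ?_)
        rw [e2 m]
        exact shell' m
    _ = 371712 + 371712 * 2 := by
        rw [ENNReal.tsum_mul_left, ENNReal.tsum_geometric, ENNReal.one_sub_inv_two, inv_inv]
    _ ≤ ENNReal.ofReal 2000000 := by
        rw [show (2000000:ℝ) = ((2000000:ℕ):ℝ) by norm_num, ENNReal.ofReal_natCast]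
        norm_num
end
end
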